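/- For every k ≥ 2 and n ≥ 1, there exists a (k,n)-de Bruijn sequence, i.e., a function w : ZMod (k^n) → Fin k such that the map sending i to the n-tuple (w(i), w(i+1), ..., w(i+n-1)) is a bijection from ZMod (k^n) to (Fin n → Fin k). -/

import Mathlib

open Equiv Function

section PermMerge

variable {α : Type*} [Fintype α] [DecidableEq α]

lemma db_periodic (σ : Equiv.Perm α) (x : α) : x ∈ Function.periodicPts ⇑σ := by
  refine Function.mk_mem_periodicPts (orderOf_pos σ) ?_
  show σ^[orderOf σ] x = x
  simp [Equiv.Perm.iterate_eq_pow, pow_orderOf_eq_one σ]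

lemma db_merge (σ : Equiv.Perm α) (x y : α) (h : ¬ σ.SameCycle x y) :
    (σ * Equiv.swap x y).SameCycle y x := by
  set p := Function.minimalPeriod ⇑σ x with hp
  have hp0 : 0 < p := Function.minimalPeriod_pos_of_mem_periodicPts (db_periodic σ x)
  have key : ∀ j, 1 ≤ j → j ≤ p → ((σ * Equiv.swap x y) ^ j) y = (σ ^ j) x := by
    intro j
    induction j with
    | zero => omega
    | succ j ih =>
      intro _ hj
      rcases Nat.eq_zero_or_pos j with hj0 | hj0
      · subst hj0
        simp [Equiv.Perm.mul_apply, Equiv.swap_apply_right]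
      · have hle : j ≤ p := by omega
        have hij := ih hj0 hle
        have hne1 : (σ ^ j) x ≠ x := by
          intro hcon
          have : Function.IsPeriodicPt ⇑σ j x := hcon
          have := this.minimalPeriod_le hj0
          omega
        have hne2 : (σ ^ j) x ≠ y := by
          intro hcon
          exact h ⟨(j : ℤ), by rw [zpow_natCast]; exact hcon⟩
        rw [pow_succ', Equiv.Perm.mul_apply, hij, Equiv.Perm.mul_apply,
          Equiv.swap_apply_of_ne_of_ne hne1 hne2, pow_succ', Equiv.Perm.mul_apply]
  have hper : (σ ^ p) x = x := Function.isPeriodicPt_minimalPeriod ⇑σ x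
  exact ⟨(p : ℤ), by rw [zpow_natCast, key p hp0 le_rfl, hper]⟩

lemma db_step (σ : Equiv.Perm α) (x y : α) (h : ¬ σ.SameCycle x y) (a : α) :
    (σ * Equiv.swap x y).SameCycle a (σ a) := by
  have hyx := db_merge σ x y h
  by_cases hax : a = x
  · subst hax
    exact hyx.symm.trans ⟨1, by simp [Equiv.Perm.mul_apply, Equiv.swap_apply_right]⟩
  by_cases hay : a = y
  · subst hay
    exact hyx.trans ⟨1, by simp [Equiv.Perm.mul_apply, Equiv.swap_apply_left]⟩
  · exact ⟨1, by simp [Equiv.Perm.mul_apply, Equiv.swap_apply_of_ne_of_ne hax hay]⟩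

lemma db_preserve (σ : Equiv.Perm α) (x y : α) (h : ¬ σ.SameCycle x y) {a b : α}
    (hab : σ.SameCycle a b) : (σ * Equiv.swap x y).SameCycle a b := by
  have key : ∀ m : ℕ, (σ * Equiv.swap x y).SameCycle a ((σ ^ m) a) := by
    intro m
    induction m with
    | zero => exact Equiv.Perm.SameCycle.refl _ _
    | succ m ih =>
      have := db_step σ x y h ((σ ^ m) a)
      rw [pow_succ', Equiv.Perm.mul_apply]
      exact ih.trans this
  obtain ⟨i, hi, rfl⟩ := hab.exists_pow_eq'
  exact key i

end PermMerge

section DeBruijnWords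

variable {k n : ℕ}

/-- shift a word left and append `a`. -/
def shiftW (u : Fin n → Fin k) (a : Fin k) : Fin n → Fin k :=
  fun t => if h : (t : ℕ) + 1 < n then u ⟨(t : ℕ) + 1, h⟩ else a

/-- a permutation of words acts by left shift on the first `n-1` coordinates. -/
def Shifty (σ : Equiv.Perm (Fin n → Fin k)) : Prop :=
  ∀ (u : Fin n → Fin k) (t : Fin n) (h : (t : ℕ) + 1 < n), σ u t = u ⟨(t : ℕ) + 1, h⟩

/-- two words agree on all coordinates except possibly the first. -/
def SameTail (x y : Fin n → Fin k) : Prop :=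
  ∀ t : Fin n, (t : ℕ) ≠ 0 → x t = y t

lemma shifty_swap [DecidableEq (Fin n → Fin k)] (σ : Equiv.Perm (Fin n → Fin k))
    (hσ : Shifty σ) (x y : Fin n → Fin k) (hxy : SameTail x y) :
    Shifty (σ * Equiv.swap x y) := by
  intro u t h
  rw [Equiv.Perm.mul_apply, hσ _ t h]
  by_cases hux : u = x
  · subst hux
    rw [Equiv.swap_apply_left]
    exact (hxy ⟨(t : ℕ) + 1, h⟩ (by simp)).symm
  by_cases huy : u = y
  · subst huy
    rw [Equiv.swap_apply_right]
    exact hxy ⟨(t : ℕ) + 1, h⟩ (by simp)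
  · rw [Equiv.swap_apply_of_ne_of_ne hux huy]

def rotW (k n : ℕ) [NeZero n] : Equiv.Perm (Fin n → Fin k) where
  toFun u := fun t => u (t + 1)
  invFun u := fun t => u (t - 1)
  left_inv u := by funext t; simp
  right_inv u := by funext t; simp

lemma shifty_rotW [NeZero n] : Shifty (rotW k n) := by
  intro u t h
  show u (t + 1) = u ⟨(t : ℕ) + 1, h⟩
  congr 1
  apply Fin.ext
  rw [Fin.val_add, Fin.val_one', Nat.mod_eq_of_lt (show 1 < n by omega),
    Nat.mod_eq_of_lt h]

lemma shifty_pow (σ : Equiv.Perm (Fin n → Fin k)) (hσ : Shifty σ) :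
    ∀ (j : ℕ) (u : Fin n → Fin k) (s t : Fin n), (s : ℕ) + j = (t : ℕ) →
      ((σ ^ j) u) s = u t := by
  intro j
  induction j with
  | zero =>
    intro u s t hst
    have : s = t := Fin.ext (by omega)
    subst this
    rfl
  | succ j ih =>
    intro u s t hst
    have hjn : (s : ℕ) + j < n := by
      have := t.isLt; omega
    have h1 : ((σ ^ (j + 1)) u) s = ((σ ^ j) (σ u)) s := by
      rw [pow_succ, Equiv.Perm.mul_apply]
    rw [h1, ih (σ u) s ⟨(s : ℕ) + j, hjn⟩ rfl]
    have h2 : ((s : ℕ) + j) + 1 < n := by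
      have := t.isLt; omega
    rw [hσ u ⟨(s : ℕ) + j, hjn⟩ h2]
    congr 1
    apply Fin.ext
    simp; omega

end DeBruijnWords
section Connect

variable {k n : ℕ}

lemma shift_mem (hn : 0 < n) (σ : Equiv.Perm (Fin n → Fin k)) (hσ : Shifty σ)
    (c : Fin n → Fin k)
    (hclosed : ∀ x y, σ.SameCycle c x → SameTail x y → σ.SameCycle c y)
    (u : Fin n → Fin k) (hu : σ.SameCycle c u) (a : Fin k) :
    σ.SameCycle c (shiftW u a) := by
  classical
  set i0 : Fin n := ⟨0, hn⟩ with hi0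
  have hgt : ∀ (b : Fin k) (t : Fin n) (h : (t : ℕ) + 1 < n),
      σ (Function.update u i0 b) t = u ⟨(t : ℕ) + 1, h⟩ := by
    intro b t h
    rw [hσ _ t h, Function.update_of_ne (by simp [hi0, Fin.ext_iff]) _ _]
  set lastI : Fin n := ⟨n - 1, by omega⟩ with hlast
  set f : Fin k → Fin k := fun b => σ (Function.update u i0 b) lastI with hf
  have hfinj : Function.Injective f := by
    intro b b' hbb
    have hg : σ (Function.update u i0 b) = σ (Function.update u i0 b') := by
      funext t
      by_cases ht : (t : ℕ) + 1 < n
      · rw [hgt b t ht, hgt b' t ht]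
      · have : t = lastI := Fin.ext (by have := t.isLt; simp [hlast]; omega)
        subst this
        exact hbb
    have := σ.injective hg
    have := congrFun this i0
    simpa using this
  have hfsurj : Function.Surjective f := Finite.surjective_of_injective hfinj
  obtain ⟨b, hb⟩ := hfsurj a
  have hgb : σ (Function.update u i0 b) = shiftW u a := by
    funext t
    by_cases ht : (t : ℕ) + 1 < n
    · rw [hgt b t ht, shiftW, dif_pos ht]
    · have : t = lastI := Fin.ext (by have := t.isLt; simp [hlast]; omega)
      subst this
      rw [shiftW, dif_neg ht]
      exact hb
  have hupd : σ.SameCycle c (Function.update u i0 b) := by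
    refine hclosed u _ hu ?_
    intro t ht
    rw [Function.update_of_ne (by simp [hi0, Fin.ext_iff]; omega)]
  have h2 : σ.SameCycle c (σ (Function.update u i0 b)) :=
    hupd.trans ⟨1, by simp⟩
  rwa [hgb] at h2

def uW [NeZero n] (c z : Fin n → Fin k) (j : ℕ) : Fin n → Fin k :=
  fun t => if h : (t : ℕ) + j < n then c ⟨(t : ℕ) + j, h⟩
    else z ⟨((t : ℕ) + j - n) % n, Nat.mod_lt _ (Nat.pos_of_ne_zero (NeZero.ne n))⟩

lemma reach_all (hn : 0 < n) (σ : Equiv.Perm (Fin n → Fin k)) (hσ : Shifty σ)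
    (c : Fin n → Fin k)
    (hclosed : ∀ x y, σ.SameCycle c x → SameTail x y → σ.SameCycle c y)
    (z : Fin n → Fin k) : σ.SameCycle c z := by
  haveI : NeZero n := ⟨by omega⟩
  have main : ∀ j, j ≤ n → σ.SameCycle c (uW c z j) := by
    intro j
    induction j with
    | zero =>
      intro _
      have h0 : uW c z 0 = c := by
        funext t
        rw [uW, dif_pos (by have := t.isLt; omega)]
        exact congrArg c (Fin.ext (show (t : ℕ) + 0 = (t : ℕ) by omega))
      rw [h0]
    | succ j ih =>
      intro hj
      have hjn : j < n := by omega
      have hu := ih (by omega)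
      have hstep := shift_mem hn σ hσ c hclosed _ hu (z ⟨j, hjn⟩)
      have heq : shiftW (uW c z j) (z ⟨j, hjn⟩) = uW c z (j + 1) := by
        funext t
        rw [shiftW, uW]
        by_cases ht : (t : ℕ) + 1 < n
        · rw [dif_pos ht, uW]
          by_cases h2 : (t : ℕ) + (j + 1) < n
          · rw [dif_pos (show ((t : ℕ) + 1) + j < n from by omega),
              dif_pos h2]
            exact congrArg c (Fin.ext (show ((t : ℕ) + 1) + j = (t : ℕ) + (j + 1) by omega))
          · rw [dif_neg (show ¬ (((t : ℕ) + 1) + j < n) from by omega),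
              dif_neg h2]
            refine congrArg z (Fin.ext ?_)
            show (((t : ℕ) + 1) + j - n) % n = ((t : ℕ) + (j + 1) - n) % n
            congr 1
            omega
        · have htv : (t : ℕ) = n - 1 := by have := t.isLt; omega
          rw [dif_neg ht, dif_neg (show ¬ ((t : ℕ) + (j + 1) < n) by omega)]
          refine congrArg z (Fin.ext ?_)
          show (j : ℕ) = ((t : ℕ) + (j + 1) - n) % n
          rw [Nat.mod_eq_of_lt (by omega)]
          omega
      rwa [heq] at hstep
  have hmn := main n le_rfl
  have hzz : uW c z n = z := by
    funext t
    rw [uW, dif_neg (by omega)]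
    refine congrArg z (Fin.ext ?_)
    show ((t : ℕ) + n - n) % n = (t : ℕ)
    rw [Nat.mod_eq_of_lt (by have := t.isLt; omega)]
    omega
  rwa [hzz] at hmn

end Connect
section Improve

variable {k n : ℕ}

lemma improve (hn : 0 < n) (c : Fin n → Fin k) :
    ∀ (m : ℕ) (σ : Equiv.Perm (Fin n → Fin k)), Shifty σ →
      {z | ¬ σ.SameCycle c z}.ncard ≤ m →
      ∃ τ : Equiv.Perm (Fin n → Fin k), Shifty τ ∧ ∀ z, τ.SameCycle c z := by
  classical
  intro m
  induction m with
  | zero =>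
    intro σ hσ hcard
    refine ⟨σ, hσ, ?_⟩
    intro z
    by_contra hz
    have : 0 < {w | ¬ σ.SameCycle c w}.ncard :=
      (Set.ncard_pos (Set.toFinite _)).mpr ⟨z, hz⟩
    omega
  | succ m ih =>
    intro σ hσ hcard
    by_cases hall : ∀ z, σ.SameCycle c z
    · exact ⟨σ, hσ, hall⟩
    by_cases hcl : ∀ x y, σ.SameCycle c x → SameTail x y → σ.SameCycle c y
    · exact ⟨σ, hσ, reach_all hn σ hσ c hcl⟩
    push_neg at hcl
    obtain ⟨x, y, hx, hxy, hy⟩ := hcl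
    have hne : ¬ σ.SameCycle x y := fun hc => hy (hx.trans hc)
    refine ih (σ * Equiv.swap x y) (shifty_swap σ hσ x y hxy) ?_
    have hyS : y ∈ {z | ¬ σ.SameCycle c z} := hy
    have hsub : {z | ¬ (σ * Equiv.swap x y).SameCycle c z} ⊆
        {z | ¬ σ.SameCycle c z} \ {y} := by
      intro z hz
      refine ⟨fun hσz => hz (db_preserve σ x y hne hσz), ?_⟩
      intro hzy
      rw [Set.mem_singleton_iff] at hzy
      refine hz (show (σ * Equiv.swap x y).SameCycle c z from ?_)
      rw [hzy]
      exact (db_preserve σ x y hne hx).trans (db_merge σ x y hne).symm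
    have h1 : {z | ¬ (σ * Equiv.swap x y).SameCycle c z}.ncard ≤
        ({z | ¬ σ.SameCycle c z} \ {y}).ncard :=
      Set.ncard_le_ncard hsub (Set.toFinite _)
    have h2 : ({z | ¬ σ.SameCycle c z} \ {y}).ncard <
        {z | ¬ σ.SameCycle c z}.ncard :=
      Set.ncard_diff_singleton_lt_of_mem hyS (Set.toFinite _)
    omega

end Improve

theorem stmt_1 (k n : ℕ) (hk : 2 ≤ k) (hn : 1 ≤ n) :
    ∃ w : ZMod (k ^ n) → Fin k,
      Function.Bijective (fun (i : ZMod (k ^ n)) (t : Fin n) => w (i + (t : ℕ))) := by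
  classical
  haveI : NeZero n := ⟨by omega⟩
  have hn0 : 0 < n := hn
  have hk0 : 0 < k := by omega
  set c : Fin n → Fin k := fun _ => ⟨0, hk0⟩ with hc
  obtain ⟨σ, hσ, hall⟩ := improve hn0 c ({z | ¬ (rotW k n).SameCycle c z}.ncard)
    (rotW k n) shifty_rotW le_rfl
  set N := k ^ n with hN
  haveI : NeZero N := ⟨by positivity⟩
  have hNcard : Fintype.card (Fin n → Fin k) = N := by
    simp [hN]
  set p := Function.minimalPeriod ⇑σ c with hp
  have hp0 : 0 < p :=
    Function.minimalPeriod_pos_of_mem_periodicPts (db_periodic σ c)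
  -- p = N
  have hGsurj : Function.Surjective (fun m : Fin p => (σ ^ (m : ℕ)) c) := by
    intro z
    obtain ⟨i, hi, hiz⟩ := (hall z).exists_pow_eq'
    refine ⟨⟨i % p, Nat.mod_lt _ hp0⟩, ?_⟩
    show (σ ^ (i % p)) c = z
    have := Function.iterate_mod_minimalPeriod_eq (f := ⇑σ) (x := c) (n := i)
    rw [← hp] at this
    exact this.trans hiz
  have hGinj : Function.Injective (fun m : Fin p => (σ ^ (m : ℕ)) c) := by
    intro i j hij
    have := Function.iterate_injOn_Iio_minimalPeriod (f := ⇑σ) (x := c)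
      (Set.mem_Iio.mpr (hp ▸ i.isLt)) (Set.mem_Iio.mpr (hp ▸ j.isLt)) hij
    exact Fin.ext this
  have hpN : p = N := by
    have h1 : Fintype.card (Fin p) ≤ Fintype.card (Fin n → Fin k) :=
      Fintype.card_le_of_injective _ hGinj
    have h2 : Fintype.card (Fin n → Fin k) ≤ Fintype.card (Fin p) :=
      Fintype.card_le_of_surjective _ hGsurj
    rw [Fintype.card_fin, hNcard] at h1 h2
    omega
  have E : ∀ a b : ℕ, a % N = b % N → (σ ^ a) c = (σ ^ b) c := by
    intro a b hab
    show σ^[a] c = σ^[b] c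
    rw [← Function.iterate_mod_minimalPeriod_eq (n := a),
      ← Function.iterate_mod_minimalPeriod_eq (n := b), ← hp, hpN, hab]
  refine ⟨fun i => (σ ^ i.val) c ⟨0, hn0⟩, ?_⟩
  have heq : (fun (i : ZMod N) (t : Fin n) => (σ ^ ((i + ((t : ℕ) : ZMod N)).val)) c ⟨0, hn0⟩)
      = fun (i : ZMod N) (t : Fin n) => (σ ^ i.val) c t := by
    funext i t
    have hmod : (i + ((t : ℕ) : ZMod N)).val % N = (i.val + (t : ℕ)) % N := by
      rw [ZMod.val_add, ZMod.val_natCast]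
      exact (Nat.mod_modEq _ N).trans (Nat.ModEq.add_left i.val (Nat.mod_modEq _ N))
    calc (σ ^ ((i + ((t : ℕ) : ZMod N)).val)) c ⟨0, hn0⟩
        = (σ ^ (i.val + (t : ℕ))) c ⟨0, hn0⟩ := by rw [E _ _ hmod]
      _ = ((σ ^ (t : ℕ)) ((σ ^ i.val) c)) ⟨0, hn0⟩ := by
          rw [add_comm, pow_add, Equiv.Perm.mul_apply]
      _ = (σ ^ i.val) c t := shifty_pow σ hσ (t : ℕ) _ ⟨0, hn0⟩ t (by simp)
  show Function.Bijective
    (fun (i : ZMod N) (t : Fin n) => (σ ^ ((i + ((t : ℕ) : ZMod N)).val)) c ⟨0, hn0⟩)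
  rw [heq]
  constructor
  · intro i j hij
    have h0 : (σ ^ i.val) c = (σ ^ j.val) c := hij
    have := Function.iterate_injOn_Iio_minimalPeriod (f := ⇑σ) (x := c)
      (Set.mem_Iio.mpr (by rw [← hp, hpN]; exact ZMod.val_lt i))
      (Set.mem_Iio.mpr (by rw [← hp, hpN]; exact ZMod.val_lt j)) h0
    exact ZMod.val_injective N this
  · intro z
    obtain ⟨i, hi, hiz⟩ := (hall z).exists_pow_eq'
    refine ⟨(i : ZMod N), ?_⟩
    show (σ ^ (((i : ℕ) : ZMod N)).val) c = z
    rw [ZMod.val_natCast]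
    rw [E (i % N) i (Nat.mod_mod_of_dvd _ dvd_rfl)]
    exact hiz
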